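/- Let A be a commutative ring and B ⊆ C two overrings of A (rings between A and its total quotient ring). If the extension A ⊆ C is flat, then the extension B ⊆ C is flat. -/

import Mathlib

open TensorProduct
set_option synthInstance.maxHeartbeats 400000
set_option maxHeartbeats 4000000

/-- Multiplication by a non-zero-divisor is injective on a flat module. -/
lemma smul_inj_of_flat {A M : Type*} [CommRing A] [AddCommGroup M] [Module A M]
    [Module.Flat A M] {s : A} (hs : s ∈ nonZeroDivisors A) :
    Function.Injective (fun x : M => s • x) := by
  have h1 : Function.Injective (LinearMap.lsmul A A s) := by
    intro x y hxy
    simp only [LinearMap.lsmul_apply, smul_eq_mul] at hxy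
    exact (mul_cancel_left_mem_nonZeroDivisors hs).mp hxy
  have h2 := Module.Flat.lTensor_preserves_injective_linearMap (M := M)
    (LinearMap.lsmul A A s) h1
  intro x y hxy
  have hxy' : s • x = s • y := hxy
  have key : ∀ z : M, (LinearMap.lTensor M (LinearMap.lsmul A A s))
      ((TensorProduct.rid A M).symm z) = (TensorProduct.rid A M).symm (s • z) := by
    intro z
    rw [TensorProduct.rid_symm_apply, TensorProduct.rid_symm_apply, LinearMap.lTensor_tmul,
      TensorProduct.smul_tmul]
    rfl
  have h3 : (TensorProduct.rid A M).symm x = (TensorProduct.rid A M).symm y :=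
    h2 (by rw [key x, key y, hxy'])
  exact (TensorProduct.rid A M).symm.injective h3

theorem statement0 (A : Type*) [CommRing A]
    (B C : Subalgebra A (Localization (nonZeroDivisors A))) (hBC : B ≤ C)
    [Module.Flat A C] :
    letI : Algebra B C := (Subalgebra.inclusion hBC).toRingHom.toAlgebra
    Module.Flat B C := by
  letI : Algebra B C := (Subalgebra.inclusion hBC).toRingHom.toAlgebra
  haveI : IsScalarTower A B C :=
    IsScalarTower.of_algebraMap_eq' (show algebraMap A C = (algebraMap B C).comp (algebraMap A B)
      from rfl)
  -- key : for c in C, c ⊗ 1 = 1 ⊗ c in C ⊗[A] C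
  have key : ∀ c : C, (c ⊗ₜ[A] (1 : C)) = ((1 : C) ⊗ₜ[A] c) := by
    intro c
    obtain ⟨⟨a, s⟩, hs⟩ := IsLocalization.surj (nonZeroDivisors A)
      (c : Localization (nonZeroDivisors A))
    have hC : (s : A) • c = algebraMap A C a := by
      ext
      simpa [Algebra.smul_def, mul_comm] using hs
    apply smul_inj_of_flat (M := C ⊗[A] C) s.2
    simp only
    rw [TensorProduct.smul_tmul', hC,
      show (s : A) • ((1:C) ⊗ₜ[A] c) = (1:C) ⊗ₜ[A] ((s : A) • c) from
        (TensorProduct.tmul_smul _ _ _).symm, hC,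
      Algebra.algebraMap_eq_smul_one, TensorProduct.smul_tmul]
  -- the multiplication map C ⊗[A] C → C is injective
  have hsec : ∀ x : C ⊗[A] C, (LinearMap.mul' A C x) ⊗ₜ[A] (1 : C) = x := by
    intro x
    induction x with
    | zero => simp
    | tmul c d =>
        rw [LinearMap.mul'_apply]
        have h1 : (c * d) ⊗ₜ[A] (1:C) = (c ⊗ₜ[A] (1:C)) * (d ⊗ₜ[A] (1:C)) := by
          rw [Algebra.TensorProduct.tmul_mul_tmul, mul_one]
        rw [h1, key d, Algebra.TensorProduct.tmul_mul_tmul, mul_one, one_mul]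
    | add x y hx hy => simp [TensorProduct.add_tmul, hx, hy]
  have hmul : Function.Injective (LinearMap.mul' A C) := by
    intro x y h
    rw [← hsec x, ← hsec y, h]
  -- the canonical B-linear map B ⊗[A] C → C
  let G : B ⊗[A] C →ₗ[B] C := LinearMap.liftBaseChange B LinearMap.id
  have hGeq : ∀ x : B ⊗[A] C, G x =
      (LinearMap.mul' A C) (LinearMap.rTensor C (Subalgebra.inclusion hBC).toLinearMap x) := by
    intro x
    induction x with
    | zero => simp
    | tmul b c =>
        simp only [G, LinearMap.liftBaseChange_tmul, LinearMap.id_apply,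
          LinearMap.rTensor_tmul, AlgHom.toLinearMap_apply, LinearMap.mul'_apply]
        rfl
    | add x y hx hy => simp [map_add, hx, hy]
  have hGinj : Function.Injective G := by
    intro x y h
    have hrt : Function.Injective (LinearMap.rTensor C (Subalgebra.inclusion hBC).toLinearMap) :=
      Module.Flat.rTensor_preserves_injective_linearMap _ (Subalgebra.inclusion_injective hBC)
    apply hrt
    apply hmul
    rw [← hGeq x, ← hGeq y, h]
  have hGsurj : Function.Surjective G := by
    intro c
    exact ⟨1 ⊗ₜ c, by simp [G]⟩
  exact Module.Flat.of_linearEquiv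
    (LinearEquiv.ofBijective G ⟨hGinj, hGsurj⟩).symm
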